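/- Let K be a field of characteristic ≠ 2, 3 containing an element s with s^2 = -3, and let b, c ∈ K^* with a cube root γ of c in K. Then the map φ sending (x_0, x_1, t) with (x_1^3 - b)t^6 = c(x_0^3 - b) and x_0 γ ≠ t^2 x_1 to (x, y) with x = (t^6 - c)/(b(x_0 γ - t^2 x_1)) and y = (s(x_0 γ + t^2 x_1)/(-2b))·x, produces a point satisfying y^2 = x^3 + ((t^6 - c)/(2b^2))^2. -/

import Mathlib

/-- Forward direction of the birational map `φ : K₆ → E`: an affine point
`(x₀, x₁, t)` of the surface `(x₁³ - b)t⁶ = c(x₀³ - b)` with `x₀γ - t²x₁ ≠ 0`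
maps to a point of the Weierstrass curve `y² = x³ + ((t⁶ - c)/(2b²))²`. -/
theorem stmt_8 (K : Type*) [Field K] (h2 : (2 : K) ≠ 0) (h3 : (3 : K) ≠ 0)
    (s : K) (hs : s ^ 2 = -3) (b c γ : K) (hb : b ≠ 0) (hc : c ≠ 0) (hγ : γ ^ 3 = c)
    (x₀ x₁ t : K) (hsurf : (x₁ ^ 3 - b) * t ^ 6 = c * (x₀ ^ 3 - b))
    (hden : x₀ * γ - t ^ 2 * x₁ ≠ 0)
    (x y : K) (hx : x = (t ^ 6 - c) / (b * (x₀ * γ - t ^ 2 * x₁)))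
    (hy : y = s * (x₀ * γ + t ^ 2 * x₁) / (-(2 * b)) * x) :
    y ^ 2 = x ^ 3 + ((t ^ 6 - c) / (2 * b ^ 2)) ^ 2 := by
  have key : t ^ 6 - c = -(x₀ * γ - t ^ 2 * x₁) *
      ((t ^ 2 * x₁) ^ 2 + t ^ 2 * x₁ * (x₀ * γ) + (x₀ * γ) ^ 2) / b := by
    rw [eq_div_iff hb]
    linear_combination (-1 : K) * hsurf + x₀ ^ 3 * hγ
  have hx' : x = -((t ^ 2 * x₁) ^ 2 + t ^ 2 * x₁ * (x₀ * γ) + (x₀ * γ) ^ 2) / b ^ 2 := by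
    rw [hx, key]
    field_simp
  have h4 : (4 : K) ≠ 0 := by
    have := mul_ne_zero h2 h2
    norm_num at this ⊢
    exact this
  subst hy
  rw [hx', key]
  field_simp
  linear_combination ((x₀ * γ + t ^ 2 * x₁) ^ 2 *
    ((t ^ 2 * x₁) ^ 2 + t ^ 2 * x₁ * (x₀ * γ) + (x₀ * γ) ^ 2) ^ 2) * hs
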